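/- For d ≥ 1 define S_d = { m : 1 ≤ m ≤ d and ((d − m) mod 2^{⌊log₂ m⌋ + 1}) < 2^{⌊log₂ m⌋} }. Then |S_d| = ∑_{i=1}^{d} (s(i) − z(i)), where s(i) and z(i) are respectively the number of 1 digits and the number of 0 digits in the binary expansion of i. -/

import Mathlib

open Finset

def c1 (k N : ℕ) : ℕ := ((Finset.range N).filter (fun i => Nat.testBit i k)).card

lemma c1_succ (k N : ℕ) : c1 k (N+1) = c1 k N + (Nat.testBit N k).toNat := by
  unfold c1
  rw [Finset.range_add_one, Finset.filter_insert]
  by_cases h : Nat.testBit N k <;> simp [h, Finset.card_insert_of_notMem]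

lemma testBit_add_pow (k M : ℕ) : (M + 2^k).testBit k = !M.testBit k := by
  rw [Nat.add_comm, Nat.testBit_two_pow_add_eq]

lemma testBit_add_pow_succ (k M : ℕ) : (M + 2^(k+1)).testBit k = M.testBit k := by
  simp only [Nat.testBit_eq_decide_div_mod_eq]
  rw [pow_succ, Nat.add_mul_div_left _ _ (Nat.two_pow_pos k), Nat.add_mod_right]

lemma c1_zero (k : ℕ) : c1 k 0 = 0 := by unfold c1; simp

lemma c1_pow (k : ℕ) : c1 k (2^k) = 0 := by
  unfold c1
  rw [Finset.card_eq_zero, Finset.filter_eq_empty_iff]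
  intro i hi
  simp only [Finset.mem_range] at hi
  simp [Nat.testBit_lt_two_pow hi]

lemma c1_pow_add (k j : ℕ) (hj : j ≤ 2^k) : c1 k (2^k + j) = j := by
  induction j with
  | zero => simpa using c1_pow k
  | succ j ih =>
    rw [← Nat.add_assoc, c1_succ, ih (by omega), Nat.add_comm (2^k) j, testBit_add_pow,
      Nat.testBit_lt_two_pow (by omega)]
    rfl

lemma c1_flip (k M : ℕ) : c1 k (M + 2^k) + c1 k M = M := by
  induction M with
  | zero => simp [c1_pow k, c1_zero]
  | succ M ih =>
    have h1 : M + 1 + 2^k = (M + 2^k) + 1 := by omega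
    rw [h1, c1_succ, c1_succ, testBit_add_pow]
    cases h : M.testBit k <;> simp [h] <;> omega

lemma c1_add_pow_succ (k M : ℕ) : c1 k (M + 2^(k+1)) = c1 k M + 2^k := by
  induction M with
  | zero =>
    have : (2:ℕ)^(k+1) = 2^k + 2^k := by rw [pow_succ]; ring
    simp [this, c1_pow_add k (2^k) le_rfl, c1_zero]
  | succ M ih =>
    have h1 : M + 1 + 2^(k+1) = (M + 2^(k+1)) + 1 := by omega
    rw [h1, c1_succ, c1_succ, testBit_add_pow_succ, ih]
    omega

lemma sum_sub_reflect (d lo hi : ℕ) (hlo : lo ≤ d) (hhi : hi ≤ d) (f : ℕ → ℤ) :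
    ∑ m ∈ Finset.Icc lo hi, f (d - m) = ∑ n ∈ Finset.Icc (d - hi) (d - lo), f n := by
  refine Finset.sum_nbij' (i := fun m => d - m) (j := fun n => d - n) ?_ ?_ ?_ ?_ ?_ <;>
    intro a ha <;> simp only [Finset.mem_Icc] at * <;>
      first
        | omega
        | (congr 1; omega)

lemma sum_range_bt (k N : ℕ) : ∑ i ∈ Finset.range N, ((i.testBit k).toNat : ℤ) = c1 k N := by
  induction N with
  | zero => simp [c1_zero]
  | succ N ih => rw [Finset.sum_range_succ, ih, c1_succ]; push_cast; ring

lemma sum_Ico_bt (k a b : ℕ) (h : a ≤ b) :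
    ∑ i ∈ Finset.Ico a b, ((i.testBit k).toNat : ℤ) = (c1 k b : ℤ) - c1 k a := by
  have h2 : (∑ i ∈ Finset.Ico 0 a, ((i.testBit k).toNat : ℤ))
      + ∑ i ∈ Finset.Ico a b, ((i.testBit k).toNat : ℤ)
      = ∑ i ∈ Finset.Ico 0 b, ((i.testBit k).toNat : ℤ) :=
    Finset.sum_Ico_consecutive _ (Nat.zero_le a) h
  simp only [← Finset.range_eq_Ico, sum_range_bt] at h2
  linarith

lemma ite_false_eq (k n : ℕ) :
    (if n.testBit k = false then (1:ℤ) else 0) = 1 - ((n.testBit k).toNat : ℤ) := by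
  cases h : n.testBit k <;> simp [h]

lemma sum_sub_reflect' (d lo hi : ℕ) (hlo : lo ≤ d) (hhi : hi ≤ d) (k : ℕ) :
    ∑ m ∈ Finset.Icc lo hi, (if (d - m).testBit k = false then (1:ℤ) else 0)
      = ∑ n ∈ Finset.Icc (d - hi) (d - lo), (if n.testBit k = false then (1:ℤ) else 0) := by
  exact sum_sub_reflect d lo hi hlo hhi (fun n => if n.testBit k = false then (1:ℤ) else 0)

lemma rhs_k (k d : ℕ) (hk : 2^k ≤ d) :
    ∑ i ∈ Finset.Icc (2^k) d, (2 * ((i.testBit k).toNat : ℤ) - 1)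
      = 2 * (c1 k (d+1) : ℤ) - (d+1) + 2^k := by
  rw [← Finset.Ico_add_one_right_eq_Icc, Finset.sum_sub_distrib, Finset.sum_const, ← Finset.mul_sum,
    sum_Ico_bt k _ _ (by omega), Nat.card_Ico, c1_pow]
  simp only [nsmul_eq_mul, mul_one]
  rw [Nat.cast_sub (by omega)]
  push_cast
  ring

lemma count_k (k d : ℕ) (hk : 2^k ≤ d) :
    ∑ m ∈ Finset.Icc (2^k) (min (2^(k+1)-1) d),
        (if (d - m).testBit k = false then (1:ℤ) else 0)
      = 2 * (c1 k (d+1) : ℤ) - (d+1) + 2^k := by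
  have hp : (0:ℕ) < 2^k := Nat.two_pow_pos k
  have hpp : (2:ℕ)^(k+1) = 2^k + 2^k := by rw [pow_succ]; ring
  rcases Nat.lt_or_ge d (2^(k+1)) with hd | hd
  · -- min = d
    have hmin : min (2^(k+1)-1) d = d := by omega
    rw [hmin, sum_sub_reflect' d _ _ hk le_rfl]
    have hall : ∀ n ∈ Finset.Icc (d - d) (d - 2^k),
        (if n.testBit k = false then (1:ℤ) else 0) = 1 := by
      intro n hn
      simp only [Finset.mem_Icc] at hn
      rw [Nat.testBit_lt_two_pow (by omega)]
      simp
    rw [Finset.sum_congr rfl hall, Finset.sum_const, Nat.card_Icc]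
    have hc : c1 k (d+1) = d + 1 - 2^k := by
      have h6 := c1_pow_add k (d + 1 - 2^k) (by omega)
      rw [show 2^k + (d + 1 - 2^k) = d + 1 by omega] at h6
      omega
    have hcast : ((2^k : ℕ) : ℤ) = (2:ℤ)^k := by push_cast; ring
    simp only [nsmul_eq_mul, mul_one]
    omega
  · -- min = 2^(k+1)-1
    have hmin : min (2^(k+1)-1) d = 2^(k+1)-1 := by omega
    rw [hmin, sum_sub_reflect' d _ _ hk (by omega)]
    have hIcc : Finset.Icc (d - (2^(k+1)-1)) (d - 2^k)
        = Finset.Ico (d + 1 - 2^(k+1)) (d + 1 - 2^k) := by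
      rw [← Finset.Ico_add_one_right_eq_Icc]
      congr 1 <;> omega
    rw [hIcc, Finset.sum_congr rfl (fun n _ => ite_false_eq k n),
      Finset.sum_sub_distrib, Finset.sum_const, sum_Ico_bt k _ _ (by omega), Nat.card_Ico]
    have hflip := c1_flip k (d + 1 - 2^k)
    rw [show d + 1 - 2^k + 2^k = d + 1 by omega] at hflip
    have hshift := c1_add_pow_succ k (d + 1 - 2^(k+1))
    rw [show d + 1 - 2^(k+1) + 2^(k+1) = d + 1 by omega] at hshift
    simp only [nsmul_eq_mul, mul_one]
    have hcast : ((2^k : ℕ) : ℤ) = (2:ℤ)^k := by push_cast; ring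
    omega


lemma cond_iff (x k : ℕ) : x % 2^(k+1) < 2^k ↔ x.testBit k = false := by
  rw [Nat.testBit_eq_decide_div_mod_eq, pow_succ, Nat.mod_mul]
  have h := Nat.mod_lt x (Nat.two_pow_pos k)
  have h2 : x / 2^k % 2 = 0 ∨ x / 2^k % 2 = 1 := by omega
  rcases h2 with h2 | h2 <;> simp [h2] <;> omega

lemma digits_sum_testBit (i : ℕ) (hi : i ≠ 0) :
    (Nat.digits 2 i).sum = ∑ k ∈ Finset.range (Nat.log 2 i + 1), (i.testBit k).toNat := by
  induction i using Nat.strong_induction_on with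
  | _ i ih =>
  rcases Nat.lt_or_ge i 2 with h2 | h2
  · have h1 : i = 1 := by omega
    subst h1
    rw [Nat.digits_def' (by norm_num : 1 < 2) one_pos]
    simp
  · have hpos : 0 < i := by omega
    have hlog : Nat.log 2 i = Nat.log 2 (i / 2) + 1 := by
      rw [Nat.log_div_base]
      have : 1 ≤ Nat.log 2 i := by
        rw [Nat.le_log_iff_pow_le (by norm_num) (by omega)]
        simpa using h2
      omega
    have hd2 : i / 2 ≠ 0 := by omega
    rw [hlog, Finset.sum_range_succ']
    simp only [Nat.testBit_add_one, Nat.testBit_zero]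
    rw [Nat.digits_def' (by norm_num : 1 < 2) hpos, List.sum_cons,
      ih (i / 2) (by omega) hd2]
    have ht : (decide (i % 2 = 1)).toNat = i % 2 := by
      have : i % 2 = 0 ∨ i % 2 = 1 := by omega
      rcases this with h | h <;> simp [h]
    rw [ht]
    ring

theorem card_Sd_eq_A268289 (d : ℕ) (hd : 1 ≤ d) :
    (((Finset.Icc 1 d).filter (fun m =>
        (d - m) % 2 ^ (Nat.log 2 m + 1) < 2 ^ (Nat.log 2 m))).card : ℤ) =
      ∑ i ∈ Finset.Icc 1 d,
        (((Nat.digits 2 i).sum : ℤ) -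
          (((Nat.digits 2 i).length : ℤ) - ((Nat.digits 2 i).sum : ℤ))) := by
  set L := Nat.log 2 d with hL
  have hLd : 2^L ≤ d := Nat.pow_log_le_self 2 (by omega)
  -- common value
  have hpow : ∀ k, k ∈ Finset.range (L+1) → 2^k ≤ d := by
    intro k hk
    simp only [Finset.mem_range] at hk
    calc 2^k ≤ 2^L := Nat.pow_le_pow_right (by norm_num) (by omega)
    _ ≤ d := hLd
  -- LHS
  have lhs_eq : (((Finset.Icc 1 d).filter (fun m =>
        (d - m) % 2 ^ (Nat.log 2 m + 1) < 2 ^ (Nat.log 2 m))).card : ℤ)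
      = ∑ k ∈ Finset.range (L+1), (2 * (c1 k (d+1) : ℤ) - (d+1) + 2^k) := by
    rw [Finset.card_filter]
    push_cast
    have step1 : ∀ m ∈ Finset.Icc 1 d,
        (if (d - m) % 2 ^ (Nat.log 2 m + 1) < 2 ^ (Nat.log 2 m) then (1:ℤ) else 0)
          = ∑ k ∈ Finset.range (L+1),
              (if Nat.log 2 m = k then (if (d-m).testBit k = false then (1:ℤ) else 0) else 0) := by
      intro m hm
      simp only [Finset.mem_Icc] at hm
      rw [Finset.sum_ite_eq]
      have hmem : Nat.log 2 m ∈ Finset.range (L+1) := by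
        simp only [Finset.mem_range]
        have := Nat.log_mono_right (b := 2) hm.2
        omega
      rw [if_pos hmem]
      exact if_congr (cond_iff _ _) rfl rfl
    rw [Finset.sum_congr rfl step1, Finset.sum_comm]
    refine Finset.sum_congr rfl ?_
    intro k hk
    have hkd := hpow k hk
    rw [← Finset.sum_filter]
    have hset : (Finset.Icc 1 d).filter (fun m => Nat.log 2 m = k)
        = Finset.Icc (2^k) (min (2^(k+1)-1) d) := by
      ext m
      simp only [Finset.mem_filter, Finset.mem_Icc, le_min_iff, Finset.mem_Icc]
      constructor
      · rintro ⟨⟨h1, h2⟩, h3⟩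
        have hlog := Nat.log_eq_iff (b := 2) (n := m) (m := k)
          (Or.inr ⟨one_lt_two, by omega⟩) |>.mp h3
        omega
      · rintro h
        have h1 : (0:ℕ) < 2^k := Nat.two_pow_pos k
        have hm1 : 1 ≤ m := by omega
        have hlog := Nat.log_eq_iff (b := 2) (n := m) (m := k)
          (Or.inr ⟨one_lt_two, by omega⟩) |>.mpr ⟨by omega, by omega⟩
        omega
    rw [hset, count_k k d hkd]
  rw [lhs_eq]
  -- RHS
  have step2 : ∀ i ∈ Finset.Icc 1 d,
      (((Nat.digits 2 i).sum : ℤ) -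
          (((Nat.digits 2 i).length : ℤ) - ((Nat.digits 2 i).sum : ℤ)))
        = ∑ k ∈ Finset.range (L+1),
            (if 2^k ≤ i then 2 * ((i.testBit k).toNat : ℤ) - 1 else 0) := by
    intro i hi
    simp only [Finset.mem_Icc] at hi
    have hi0 : i ≠ 0 := by omega
    rw [Nat.digits_len 2 i (by norm_num) hi0, digits_sum_testBit i hi0]
    have hrange : Finset.range (Nat.log 2 i + 1)
        = (Finset.range (L+1)).filter (fun k => 2^k ≤ i) := by
      ext k
      simp only [Finset.mem_range, Finset.mem_filter]
      rw [← Nat.le_log_iff_pow_le one_lt_two hi0]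
      have := Nat.log_mono_right (b := 2) hi.2
      omega
    have expand : ((∑ k ∈ Finset.range (Nat.log 2 i + 1), (i.testBit k).toNat : ℕ) : ℤ)
          - (((Nat.log 2 i : ℤ) + 1) - (∑ k ∈ Finset.range (Nat.log 2 i + 1), (i.testBit k).toNat : ℕ))
        = ∑ k ∈ Finset.range (Nat.log 2 i + 1), (2 * ((i.testBit k).toNat : ℤ) - 1) := by
      rw [Finset.sum_sub_distrib, Finset.sum_const, ← Finset.mul_sum]
      push_cast
      simp only [nsmul_eq_mul, mul_one, Finset.card_range]
      push_cast
      ring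
    push_cast
    push_cast at expand
    rw [expand, hrange, Finset.sum_filter]
  rw [Finset.sum_congr rfl step2, Finset.sum_comm]
  refine Finset.sum_congr rfl ?_
  intro k hk
  have hkd := hpow k hk
  rw [← Finset.sum_filter]
  have hset : (Finset.Icc 1 d).filter (fun i => 2^k ≤ i) = Finset.Icc (2^k) d := by
    ext i
    have h1 : (0:ℕ) < 2^k := Nat.two_pow_pos k
    simp only [Finset.mem_filter, Finset.mem_Icc]
    omega
  rw [hset, rhs_k k d hkd]
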